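/- Let Ξ ⊆ ℝ^d be open with nonempty boundary, and let x, y ∈ Ξ with |x − y| ≤ (1/(10√d)) · min(dist(x, ∂Ξ), dist(y, ∂Ξ)). Then there exists an intersecting chain of Whitney cubes of Ξ of length at most 4 connecting x and y, i.e., cubes Q₁,…,Q_m ∈ 𝒲(∂Ξ^c complement) with m ≤ 4, x ∈ Q₁, y ∈ Q_m, and Q_j ∩ Q_{j+1} ≠ ∅ for all j. -/

import Mathlib

open Set Metric MeasureTheory ENNReal NNReal

noncomputable section

abbrev Euc (d : ℕ) := EuclideanSpace ℝ (Fin d)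

/-- The (extended) distance between two sets, `⊤` if one of them behaves emptily. -/
noncomputable def setEDist {α : Type*} [PseudoEMetricSpace α] (A B : Set α) : ℝ≥0∞ :=
  ⨅ a ∈ A, EMetric.infEdist a B

/-- The distance between two sets, as a real number. -/
noncomputable def setDist {α : Type*} [PseudoEMetricSpace α] (A B : Set α) : ℝ :=
  (setEDist A B).toReal

/-- The closed axis-parallel cube with center `c` and half side length `r`. -/
def cube (d : ℕ) (c : Euc d) (r : ℝ) : Set (Euc d) :=
  {x : Euc d | ∀ i, |x i - c i| ≤ r}

/-- A closed axis-parallel (nondegenerate) cube in `ℝ^d`. -/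
def IsClosedCube {d : ℕ} (Q : Set (Euc d)) : Prop :=
  ∃ (c : Euc d) (r : ℝ), 0 < r ∧ Q = cube d c r

/-- A dyadic cube: a cube of the mesh determined by the lattice `2^(-k) ℤ^d`. -/
def IsDyadicCube {d : ℕ} (Q : Set (Euc d)) : Prop :=
  ∃ (k : ℤ) (m : Fin d → ℤ),
    Q = {x : Euc d | ∀ i, (m i : ℝ) * 2 ^ (-k) ≤ x i ∧ x i ≤ ((m i : ℝ) + 1) * 2 ^ (-k)}

/-- `𝒲` is a Whitney decomposition of the open set `Ξ`: a collection of dyadic cubes with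
pairwise disjoint interiors covering `Ξ`, such that `diam Q ≤ dist(Q, Ξᶜ) ≤ 4 diam Q`,
and intersecting cubes have comparable diameters. -/
def IsWhitneyDecomp {d : ℕ} (Ξ : Set (Euc d)) (𝒲 : Set (Set (Euc d))) : Prop :=
  (∀ Q ∈ 𝒲, IsDyadicCube Q) ∧
  (⋃₀ 𝒲 = Ξ) ∧
  (𝒲.Pairwise fun Q Q' => interior Q ∩ interior Q' = ∅) ∧
  (∀ Q ∈ 𝒲, Metric.diam Q ≤ setDist Q Ξᶜ ∧ setDist Q Ξᶜ ≤ 4 * Metric.diam Q) ∧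
  (∀ Q ∈ 𝒲, ∀ Q' ∈ 𝒲, (Q ∩ Q').Nonempty → Metric.diam Q ≤ 4 * Metric.diam Q')

/-- Coordinate difference is bounded by the Euclidean distance. -/
lemma coord_le_dist {d : ℕ} (p q : Euc d) (i : Fin d) : |p i - q i| ≤ dist p q := by
  rw [EuclideanSpace.dist_eq, ← Real.sqrt_sq_eq_abs]
  apply Real.sqrt_le_sqrt
  calc (p i - q i) ^ 2 = dist (p i) (q i) ^ 2 := by rw [Real.dist_eq, sq_abs]
    _ ≤ ∑ j, dist (p j) (q j) ^ 2 :=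
      Finset.single_le_sum (f := fun j => dist (p j) (q j) ^ 2)
        (fun j _ => sq_nonneg _) (Finset.mem_univ i)

/-- Distance bound for points of an axis-parallel box with side `c`. -/
lemma dist_le_of_box {d : ℕ} (p q : Euc d) (c : ℝ) (hc : 0 ≤ c)
    (h : ∀ i, |p i - q i| ≤ c) : dist p q ≤ Real.sqrt d * c := by
  rw [EuclideanSpace.dist_eq]
  have hsum : ∑ j, dist (p j) (q j) ^ 2 ≤ (d : ℝ) * c ^ 2 := by
    calc ∑ j, dist (p j) (q j) ^ 2 ≤ ∑ _j : Fin d, c ^ 2 := by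
          apply Finset.sum_le_sum
          intro j _
          rw [Real.dist_eq]
          exact pow_le_pow_left₀ (abs_nonneg _) (h j) 2
      _ = (d : ℝ) * c ^ 2 := by simp [Finset.sum_const]
  calc Real.sqrt (∑ j, dist (p j) (q j) ^ 2) ≤ Real.sqrt ((d:ℝ) * c ^ 2) := Real.sqrt_le_sqrt hsum
    _ = Real.sqrt d * c := by
        rw [Real.sqrt_mul (by positivity), Real.sqrt_sq hc]

/-- 1-D dyadic gap lemma: if two dyadic intervals contain points at distance strictly less
than the coarser mesh size, the left endpoint of the second is at most the right endpoint
of the first. -/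
lemma dyadic_gap (k₁ k₂ K : ℤ) (h1 : k₁ ≤ K) (h2 : k₂ ≤ K) (m₁ m₂ : ℤ) (u v : ℝ)
    (hu : u ≤ ((m₁:ℝ) + 1) * 2 ^ (-k₁)) (hv : (m₂:ℝ) * 2 ^ (-k₂) ≤ v)
    (h : |u - v| < (2:ℝ) ^ (-K)) : (m₂:ℝ) * 2 ^ (-k₂) ≤ ((m₁:ℝ) + 1) * 2 ^ (-k₁) := by
  by_contra hlt
  push_neg at hlt
  set n₁ : ℕ := (K - k₁).toNat with hn₁
  set n₂ : ℕ := (K - k₂).toNat with hn₂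
  have hc1 : (n₁ : ℤ) = K - k₁ := Int.toNat_of_nonneg (by omega)
  have hc2 : (n₂ : ℤ) = K - k₂ := Int.toNat_of_nonneg (by omega)
  have e1 : (2:ℝ) ^ (-k₁) = ((2 ^ n₁ : ℤ) : ℝ) * 2 ^ (-K) := by
    push_cast
    rw [← zpow_natCast (2:ℝ) n₁, ← zpow_add₀ (two_ne_zero)]
    congr 1
    omega
  have e2 : (2:ℝ) ^ (-k₂) = ((2 ^ n₂ : ℤ) : ℝ) * 2 ^ (-K) := by
    push_cast
    rw [← zpow_natCast (2:ℝ) n₂, ← zpow_add₀ (two_ne_zero)]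
    congr 1
    omega
  have hKpos : (0:ℝ) < 2 ^ (-K) := by positivity
  have key : ((m₁ + 1) * 2 ^ n₁ : ℤ) < (m₂ * 2 ^ n₂ : ℤ) := by
    have h3 : (((m₁ + 1) * 2 ^ n₁ : ℤ) : ℝ) * 2 ^ (-K) < ((m₂ * 2 ^ n₂ : ℤ) : ℝ) * 2 ^ (-K) := by
      rw [e1, e2] at hlt
      push_cast at hlt ⊢
      nlinarith
    have h' := lt_of_mul_lt_mul_right h3 hKpos.le
    exact_mod_cast h'
  have key' : ((m₁ + 1) * 2 ^ n₁ : ℤ) + 1 ≤ (m₂ * 2 ^ n₂ : ℤ) := key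
  have keyR : (((m₁ + 1) * 2 ^ n₁ : ℤ) : ℝ) + 1 ≤ ((m₂ * 2 ^ n₂ : ℤ) : ℝ) := by exact_mod_cast key'
  have hgap : (2:ℝ) ^ (-K) ≤ v - u := by
    have h1' : u ≤ (((m₁ + 1) * 2 ^ n₁ : ℤ) : ℝ) * 2 ^ (-K) := by
      rw [e1] at hu; push_cast at hu ⊢; nlinarith
    have h2' : (((m₂ * 2 ^ n₂ : ℤ)) : ℝ) * 2 ^ (-K) ≤ v := by
      rw [e2] at hv; push_cast at hv ⊢; nlinarith
    nlinarith
  have := abs_lt.mp h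
  linarith

/-- Two dyadic cubes containing points closer (coordinatewise) than the coarser mesh size
must intersect. -/
lemma dyadic_inter {d : ℕ} (k₁ k₂ : ℤ) (m₁ m₂ : Fin d → ℤ) (p q : Euc d)
    (hp : ∀ i, (m₁ i : ℝ) * 2 ^ (-k₁) ≤ p i ∧ p i ≤ ((m₁ i : ℝ) + 1) * 2 ^ (-k₁))
    (hq : ∀ i, (m₂ i : ℝ) * 2 ^ (-k₂) ≤ q i ∧ q i ≤ ((m₂ i : ℝ) + 1) * 2 ^ (-k₂))
    (h : ∀ i, |p i - q i| < (2:ℝ) ^ (-(max k₁ k₂))) :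
    ∃ z : Euc d,
      (∀ i, (m₁ i : ℝ) * 2 ^ (-k₁) ≤ z i ∧ z i ≤ ((m₁ i : ℝ) + 1) * 2 ^ (-k₁)) ∧
      (∀ i, (m₂ i : ℝ) * 2 ^ (-k₂) ≤ z i ∧ z i ≤ ((m₂ i : ℝ) + 1) * 2 ^ (-k₂)) := by
  refine ⟨WithLp.toLp 2 (fun i => max ((m₁ i : ℝ) * 2 ^ (-k₁)) ((m₂ i : ℝ) * 2 ^ (-k₂)) : Fin d → ℝ),
    fun i => ?_, fun i => ?_⟩ <;>
  · have hA : (m₂ i : ℝ) * 2 ^ (-k₂) ≤ ((m₁ i : ℝ) + 1) * 2 ^ (-k₁) :=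
      dyadic_gap k₁ k₂ (max k₁ k₂) (le_max_left _ _) (le_max_right _ _) (m₁ i) (m₂ i)
        (p i) (q i) (hp i).2 (hq i).1 (h i)
    have hB : (m₁ i : ℝ) * 2 ^ (-k₁) ≤ ((m₂ i : ℝ) + 1) * 2 ^ (-k₂) :=
      dyadic_gap k₂ k₁ (max k₁ k₂) (le_max_right _ _) (le_max_left _ _) (m₂ i) (m₁ i)
        (q i) (p i) (hq i).2 (hp i).1 (by rw [abs_sub_comm]; exact h i)
    have hb1 : (m₁ i : ℝ) * 2 ^ (-k₁) ≤ ((m₁ i : ℝ) + 1) * 2 ^ (-k₁) :=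
      le_trans (hp i).1 (hp i).2
    have hb2 : (m₂ i : ℝ) * 2 ^ (-k₂) ≤ ((m₂ i : ℝ) + 1) * 2 ^ (-k₂) :=
      le_trans (hq i).1 (hq i).2
    constructor
    · first
        | exact le_max_left _ _
        | exact le_max_right _ _
    · exact max_le (by assumption) (by assumption)

/-- The distance from a point of `Q` to `Ξᶜ` is at most `setDist Q Ξᶜ + diam Q`. -/
lemma infDist_le_setDist_add_diam {d : ℕ} (Ξ : Set (Euc d)) (hne : Ξᶜ.Nonempty)
    (Q : Set (Euc d)) (p : Euc d) (hp : p ∈ Q) (hQ : EMetric.diam Q ≠ ⊤) :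
    infDist p Ξᶜ ≤ setDist Q Ξᶜ + Metric.diam Q := by
  have h1 : EMetric.infEdist p Ξᶜ ≤ setEDist Q Ξᶜ + EMetric.diam Q := by
    rw [← tsub_le_iff_right, setEDist]
    refine le_iInf₂ fun a ha => ?_
    rw [tsub_le_iff_right]
    exact EMetric.infEdist_le_infEdist_add_edist.trans
      (add_le_add le_rfl (EMetric.edist_le_diam_of_mem hp ha))
  have hS : setEDist Q Ξᶜ ≠ ⊤ := by
    have hle : setEDist Q Ξᶜ ≤ EMetric.infEdist p Ξᶜ := iInf₂_le p hp
    exact ne_top_of_le_ne_top (Metric.infEdist_ne_top hne) hle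
  have hRHS : setEDist Q Ξᶜ + EMetric.diam Q ≠ ⊤ := by
    simp [hS, hQ]
  calc infDist p Ξᶜ = (EMetric.infEdist p Ξᶜ).toReal := rfl
    _ ≤ (setEDist Q Ξᶜ + EMetric.diam Q).toReal := ENNReal.toReal_mono hRHS h1
    _ = setDist Q Ξᶜ + Metric.diam Q := by
        rw [ENNReal.toReal_add hS hQ]; rfl

/-- If `x, y ∈ Ξ` with `|x − y| ≤ (1/(10√d)) min(dist(x, ∂Ξ), dist(y, ∂Ξ))`, then `x` and `y`
can be connected by an intersecting chain of at most `4` Whitney cubes of `Ξ`. -/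
theorem exists_short_intersecting_chain {d : ℕ} (hd : 0 < d) (Ξ : Set (Euc d))
    (hΞ : IsOpen Ξ) (hbd : (frontier Ξ).Nonempty)
    (𝒲 : Set (Set (Euc d))) (hW : IsWhitneyDecomp Ξ 𝒲)
    (x y : Euc d) (hx : x ∈ Ξ) (hy : y ∈ Ξ)
    (hxy : dist x y ≤ (1 / (10 * Real.sqrt d)) *
      min (infDist x (frontier Ξ)) (infDist y (frontier Ξ))) :
    ∃ m : ℕ, 1 ≤ m ∧ m ≤ 4 ∧ ∃ Q : ℕ → Set (Euc d),
      (∀ i < m, Q i ∈ 𝒲) ∧ x ∈ Q 0 ∧ y ∈ Q (m - 1) ∧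
      ∀ i, i + 1 < m → (Q i ∩ Q (i + 1)).Nonempty := by
  obtain ⟨hdy, hcover, _hdisj, hdistW, _hcomp⟩ := hW
  -- basic positivity facts
  have hsd : (0:ℝ) < Real.sqrt d := Real.sqrt_pos.mpr (by exact_mod_cast hd)
  have hfront_sub : frontier Ξ ⊆ Ξᶜ := by
    intro z hz
    exact fun hzΞ => (disjoint_frontier_iff_isOpen.mpr hΞ).ne_of_mem hz hzΞ rfl
  have hne : Ξᶜ.Nonempty := ⟨hbd.choose, hfront_sub hbd.choose_spec⟩
  have hΞne_univ : Ξ ≠ univ := by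
    intro h
    rcases hne with ⟨z, hz⟩
    simp [h] at hz
  set D : ℝ := min (infDist x (frontier Ξ)) (infDist y (frontier Ξ)) with hD
  have hDx : 0 < infDist x (frontier Ξ) :=
    ((isClosed_frontier.notMem_iff_infDist_pos hbd).mp
      (fun hxf => (hfront_sub hxf) hx))
  have hDy : 0 < infDist y (frontier Ξ) :=
    ((isClosed_frontier.notMem_iff_infDist_pos hbd).mp
      (fun hyf => (hfront_sub hyf) hy))
  have hDpos : 0 < D := lt_min hDx hDy
  -- the cubes containing x and y
  have hxU : x ∈ ⋃₀ 𝒲 := hcover.symm ▸ hx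
  have hyU : y ∈ ⋃₀ 𝒲 := hcover.symm ▸ hy
  obtain ⟨Qx, hQxW, hxQx⟩ := hxU
  obtain ⟨Qy, hQyW, hyQy⟩ := hyU
  obtain ⟨k₁, m₁, hQx_eq⟩ := hdy Qx hQxW
  obtain ⟨k₂, m₂, hQy_eq⟩ := hdy Qy hQyW
  -- side-length lower bound for a Whitney cube containing a point p of Ξ
  have side_lb : ∀ (Q : Set (Euc d)) (k : ℤ) (m : Fin d → ℤ), Q ∈ 𝒲 →
      Q = {x : Euc d | ∀ i, (m i : ℝ) * 2 ^ (-k) ≤ x i ∧ x i ≤ ((m i : ℝ) + 1) * 2 ^ (-k)} →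
      ∀ p : Euc d, p ∈ Q → p ∈ Ξ →
      infDist p (frontier Ξ) ≤ 5 * Real.sqrt d * 2 ^ (-k) := by
    intro Q k m hQW hQeq p hpQ hpΞ
    have hside : (0:ℝ) ≤ 2 ^ (-k) := by positivity
    -- diameter bound
    have hdiam : Metric.diam Q ≤ Real.sqrt d * 2 ^ (-k) := by
      apply Metric.diam_le_of_forall_dist_le (by positivity)
      intro a ha b hb
      rw [hQeq] at ha hb
      exact dist_le_of_box a b _ hside (fun i => by
        have h1 := ha i; have h2 := hb i
        rw [abs_le]; constructor <;> nlinarith [h1.1, h1.2, h2.1, h2.2])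
    have hediam : EMetric.diam Q ≠ ⊤ := by
      refine ne_top_of_le_ne_top (ENNReal.ofReal_ne_top : ENNReal.ofReal (Real.sqrt d * 2 ^ (-k)) ≠ ⊤) ?_
      apply EMetric.diam_le
      intro a ha b hb
      rw [edist_dist]
      apply ENNReal.ofReal_le_ofReal
      rw [hQeq] at ha hb
      exact dist_le_of_box a b _ hside (fun i => by
        have h1 := ha i; have h2 := hb i
        rw [abs_le]; constructor <;> nlinarith [h1.1, h1.2, h2.1, h2.2])
    -- frontier distance ≤ complement distance
    have hfc : infDist p (frontier Ξ) ≤ infDist p Ξᶜ := by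
      obtain ⟨z, hzf, hz⟩ := exists_mem_frontier_infDist_compl_eq_dist hpΞ hΞne_univ
      rw [hz]
      exact infDist_le_dist_of_mem hzf
    have h5 : infDist p Ξᶜ ≤ 5 * Metric.diam Q := by
      have := infDist_le_setDist_add_diam Ξ hne Q p hpQ hediam
      have h4 := (hdistW Q hQW).2
      linarith
    calc infDist p (frontier Ξ) ≤ infDist p Ξᶜ := hfc
      _ ≤ 5 * Metric.diam Q := h5
      _ ≤ 5 * (Real.sqrt d * 2 ^ (-k)) := by linarith
      _ = 5 * Real.sqrt d * 2 ^ (-k) := by ring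
  have hs1 : D / (5 * Real.sqrt d) ≤ 2 ^ (-k₁) := by
    have := side_lb Qx k₁ m₁ hQxW hQx_eq x hxQx hx
    rw [div_le_iff₀ (by positivity)]
    have hDle : D ≤ infDist x (frontier Ξ) := min_le_left _ _
    nlinarith [hDle]
  have hs2 : D / (5 * Real.sqrt d) ≤ 2 ^ (-k₂) := by
    have := side_lb Qy k₂ m₂ hQyW hQy_eq y hyQy hy
    rw [div_le_iff₀ (by positivity)]
    have hDle : D ≤ infDist y (frontier Ξ) := min_le_right _ _
    nlinarith [hDle]
  have hsK : D / (5 * Real.sqrt d) ≤ (2:ℝ) ^ (-(max k₁ k₂)) := by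
    rcases max_cases k₁ k₂ with ⟨h, _⟩ | ⟨h, _⟩ <;> rw [h] <;> assumption
  have hdxy : dist x y < (2:ℝ) ^ (-(max k₁ k₂)) := by
    have : dist x y ≤ (1 / (10 * Real.sqrt d)) * D := hxy
    have hlt : (1 / (10 * Real.sqrt d)) * D < D / (5 * Real.sqrt d) := by
      have e : D / (5 * Real.sqrt d) - (1 / (10 * Real.sqrt d)) * D = D / (10 * Real.sqrt d) := by
        field_simp
        ring
      have hp : 0 < D / (10 * Real.sqrt d) := by positivity
      linarith
    linarith
  -- the two cubes intersect
  obtain ⟨z, hz1, hz2⟩ := dyadic_inter k₁ k₂ m₁ m₂ x y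
    (by rw [hQx_eq] at hxQx; exact hxQx) (by rw [hQy_eq] at hyQy; exact hyQy)
    (fun i => lt_of_le_of_lt (coord_le_dist x y i) hdxy)
  refine ⟨2, by norm_num, by norm_num, fun n => if n = 0 then Qx else Qy, ?_, ?_, ?_, ?_⟩
  · intro i _
    by_cases h : i = 0 <;> simp [h, hQxW, hQyW]
  · simp [hxQx]
  · simp [hyQy]
  · intro i hi
    have : i = 0 := by omega
    subst this
    simp only [if_pos rfl, if_neg one_ne_zero]
    exact ⟨z, by rw [hQx_eq]; exact hz1, by rw [hQy_eq]; exact hz2⟩
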